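/- Let M be a left A-module with a flat connection ∇ with respect to the universal differential calculus. Define c̃: M⊗(A⊗A) → (A⊗A)⊗M by c̃(m⊗ω) = ω⊗m − Σ (m_A·ω)⊗m_M, where m_A·ω denotes multiplication of the first tensor factor of ω ∈ A⊗A by m_A on the left. Then for all m ∈ M and all ω, ω̃ ∈ Ω¹A := ker(μ: A⊗A → A), the following identity holds in (A⊗A)⊗(A⊗A)⊗M: (id ⊗ c̃)((c̃ ⊗ id)(m⊗ω⊗ω̃)) = ω⊗ω̃⊗m − Σ (m_A·ω)⊗ω̃⊗m_M. (This is the compatibility σ² = (id⊗σ¹)∘(σ¹⊗id) making M a flat differentiable bimodule.) -/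
import Mathlib


open TensorProduct

variable (K A M : Type*) [Field K] [Ring A] [Algebra K A]
  [AddCommGroup M] [Module K M] [Module A M] [IsScalarTower K A M]

/-- The action map `A ⊗ M → M`, `a ⊗ m ↦ a • m`. -/
noncomputable def actMap : A ⊗[K] M →ₗ[K] M :=
  TensorProduct.lift (LinearMap.mk₂ K (fun a m => a • m)
    (fun a b m => add_smul a b m)
    (fun k a m => smul_assoc k a m)
    (fun a m n => smul_add a m n)
    (fun k a m => (smul_comm k a m).symm))

/-- Left multiplication by `a : A` on a left `A`-module, as a `K`-linear map. -/
def lsmulMap (a : A) : M →ₗ[K] M where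
  toFun := fun m => a • m
  map_add' := fun x y => smul_add a x y
  map_smul' := fun k m => (smul_comm k a m).symm

/-- `a ↦ a • n` as a `K`-linear map `A → M`. -/
def smulBy (n : M) : A →ₗ[K] M where
  toFun := fun a => a • n
  map_add' := fun a b => add_smul a b n
  map_smul' := fun k a => smul_assoc k a n

/-- `D : M → A ⊗ M` is a connection with respect to the universal differential
calculus. -/
def IsConnection (D : M →ₗ[K] A ⊗[K] M) : Prop :=
  (∀ m : M, actMap K A M (D m) = 0) ∧
  ∀ (a : A) (m : M),
    D (a • m) = LinearMap.rTensor M (LinearMap.mulLeft K a) (D m)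
      + (1 : A) ⊗ₜ[K] (a • m) - a ⊗ₜ[K] m

/-- Flatness of a connection: `Σ 1 ⊗ m_A ⊗ m_M = Σ m_A ⊗ D(m_M)`. -/
def IsFlatConnection (D : M →ₗ[K] A ⊗[K] M) : Prop :=
  ∀ m : M, (1 : A) ⊗ₜ[K] (D m) = LinearMap.lTensor A D (D m)

/-- The induced right operation `m·a := a m − Σ m_A a m_M`. -/
noncomputable def rop (D : M →ₗ[K] A ⊗[K] M) (m : M) (a : A) : M :=
  a • m - actMap K A M (LinearMap.rTensor M (LinearMap.mulRight K a) (D m))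

variable (N : Type*) [AddCommGroup N] [Module K N] [Module A N] [IsScalarTower K A N]

/-- The map `N ⊗ A → N`, `n ⊗ a ↦ a • n`. -/
noncomputable def ract : N ⊗[K] A →ₗ[K] N :=
  TensorProduct.lift (LinearMap.mk₂ K (fun n a => a • n)
    (fun n₁ n₂ a => smul_add a n₁ n₂)
    (fun k n a => (smul_comm k a n).symm)
    (fun n a b => add_smul a b n)
    (fun k n a => smul_assoc k a n))

/-- The map `c̃ : M ⊗ N → N ⊗ M`, `m ⊗ n ↦ n ⊗ m − Σ (m_A • n) ⊗ m_M`, associated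
with a connection `D` on `M`. -/
noncomputable def ctMap (D : M →ₗ[K] A ⊗[K] M) : M ⊗[K] N →ₗ[K] N ⊗[K] M :=
  (LinearMap.id - (LinearMap.rTensor M (ract K A N)).comp
      (((TensorProduct.assoc K N A M).symm.toLinearMap).comp
        (LinearMap.lTensor N D))).comp
    (TensorProduct.comm K M N).toLinearMap

lemma ract_tmul (n : N) (a : A) : ract K A N (n ⊗ₜ[K] a) = a • n := rfl

lemma ctMap_tmul (D : M →ₗ[K] A ⊗[K] M) (m : M) (n : N) :
    ctMap K A M N D (m ⊗ₜ[K] n)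
      = n ⊗ₜ[K] m - TensorProduct.map (smulBy K A N n) LinearMap.id (D m) := by
  have h : (LinearMap.rTensor M (ract K A N)).comp
      (((TensorProduct.assoc K N A M).symm.toLinearMap).comp
        ((TensorProduct.mk K N (A ⊗[K] M)) n))
      = TensorProduct.map (smulBy K A N n) LinearMap.id := by
    apply TensorProduct.ext'
    intro a x
    simp [ract_tmul, smulBy]
  have h2 : LinearMap.rTensor M (ract K A N)
      ((TensorProduct.assoc K N A M).symm (n ⊗ₜ[K] (D m)))
      = TensorProduct.map (smulBy K A N n) LinearMap.id (D m) := by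
    have := LinearMap.congr_fun h (D m)
    simpa using this
  simp only [ctMap, LinearMap.comp_apply, LinearEquiv.coe_coe,
    TensorProduct.comm_tmul, LinearMap.sub_apply, LinearMap.id_apply,
    LinearMap.lTensor_tmul]
  rw [h2]

/-- For a flat connection `D` on `M` and universal one-forms
`ω, ω̃ ∈ Ω¹A = ker μ`, the composite `(id ⊗ c̃) ∘ (c̃ ⊗ id)` applied to `m ⊗ ω ⊗ ω̃`
equals `ω ⊗ ω̃ ⊗ m − Σ (m_A·ω) ⊗ ω̃ ⊗ m_M`. Here `c̃ : M ⊗ (A⊗A) → (A⊗A) ⊗ M` is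
`m ⊗ ω ↦ ω ⊗ m − Σ (m_A·ω) ⊗ m_M`, where `A⊗A` is a left `A`-module via
multiplication on the first factor. -/
theorem ctMap_square_on_one_forms (D : M →ₗ[K] A ⊗[K] M)
    (hconn : IsConnection K A M D) (hflat : IsFlatConnection K A M D)
    (m : M) (ω ω' : A ⊗[K] A)
    (hω : ω ∈ LinearMap.ker (LinearMap.mul' K A))
    (hω' : ω' ∈ LinearMap.ker (LinearMap.mul' K A)) :
    LinearMap.lTensor (A ⊗[K] A) (ctMap K A M (A ⊗[K] A) D)
        ((TensorProduct.assoc K (A ⊗[K] A) M (A ⊗[K] A))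
          ((ctMap K A M (A ⊗[K] A) D (m ⊗ₜ[K] ω)) ⊗ₜ[K] ω'))
      = ω ⊗ₜ[K] (ω' ⊗ₜ[K] m)
        - TensorProduct.map (smulBy K A (A ⊗[K] A) ω)
            (TensorProduct.mk K (A ⊗[K] A) M ω') (D m) := by
  set F : A ⊗[K] (A ⊗[K] M) →ₗ[K] (A ⊗[K] A) ⊗[K] ((A ⊗[K] A) ⊗[K] M) :=
    TensorProduct.map (smulBy K A (A ⊗[K] A) ω)
      (TensorProduct.map (smulBy K A (A ⊗[K] A) ω') LinearMap.id) with hF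
  -- Key linearized identity, proved for all u : A ⊗ M by induction.
  have key : ∀ u : A ⊗[K] M,
      LinearMap.lTensor (A ⊗[K] A) (ctMap K A M (A ⊗[K] A) D)
        ((TensorProduct.assoc K (A ⊗[K] A) M (A ⊗[K] A))
          ((TensorProduct.map (smulBy K A (A ⊗[K] A) ω) LinearMap.id u) ⊗ₜ[K] ω'))
      = TensorProduct.map (smulBy K A (A ⊗[K] A) ω) (TensorProduct.mk K (A ⊗[K] A) M ω') u
        - F (LinearMap.lTensor A D u) := by
    intro u
    induction u using TensorProduct.induction_on with
    | zero => simp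
    | tmul a x =>
      simp only [TensorProduct.map_tmul, LinearMap.id_apply,
        TensorProduct.assoc_tmul, LinearMap.lTensor_tmul,
        TensorProduct.mk_apply, hF]
      rw [ctMap_tmul, TensorProduct.tmul_sub]
    | add u v hu hv =>
      simp only [map_add, TensorProduct.add_tmul] at *
      rw [hu, hv]
      abel
  have hflatm : F ((1 : A) ⊗ₜ[K] (D m)) = F (LinearMap.lTensor A D (D m)) := by
    rw [hflat m]
  have hFone : F ((1 : A) ⊗ₜ[K] (D m))
      = ω ⊗ₜ[K] (TensorProduct.map (smulBy K A (A ⊗[K] A) ω') LinearMap.id (D m)) := by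
    simp only [hF, TensorProduct.map_tmul]
    congr 1
    show (1 : A) • ω = ω
    exact one_smul A ω
  rw [ctMap_tmul, TensorProduct.sub_tmul, map_sub, map_sub, key (D m),
    ← hflatm, hFone]
  rw [show (TensorProduct.assoc K (A ⊗[K] A) M (A ⊗[K] A)) ((ω ⊗ₜ[K] m) ⊗ₜ[K] ω')
      = ω ⊗ₜ[K] (m ⊗ₜ[K] ω') from TensorProduct.assoc_tmul ω m ω',
    LinearMap.lTensor_tmul, ctMap_tmul, TensorProduct.tmul_sub]
  abel
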